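/- Let $E \subseteq [n]^2$ be a symmetric edge set (with all self-loops), and let $\{p_{ij} \in (0,1) : (i,j) \in E, i \ne j\}$ be a pairwise comparison model whose canonical Markov matrix $S$ is irreducible, aperiodic, with unique stationary distribution $\pi$. If $S$ is reversible with respect to $\pi$ and $p_{ij} + p_{ji} = 1$ for all $(i,j) \in E$ with $i \ne j$, then the model is a BTL model: for all $(i,j) \in E$ with $i \ne j$, $p_{ij} = \pi_j/(\pi_i + \pi_j)$. -/
import Mathlib


open Finset

/-- If the canonical Markov matrix of a pairwise comparison model is irreducible,
aperiodic, with unique stationary distribution `π`, is reversible with respect to `π`,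
and the model satisfies translated skew-symmetry, then the model is a BTL model. -/
theorem reversible_skew_symmetric_implies_btl (n : ℕ)
    (E : Fin n → Fin n → Prop) (hEsymm : ∀ i j, E i j → E j i) (hEself : ∀ i, E i i)
    (p : Fin n → Fin n → ℝ)
    (hp : ∀ i j, i ≠ j → E i j → 0 < p i j ∧ p i j < 1)
    (d : ℝ) (hd : 0 < d)
    (S : Matrix (Fin n) (Fin n) ℝ)
    (hSoff : ∀ i j, i ≠ j → E i j → S i j = p i j / d)
    (hSzero : ∀ i j, i ≠ j → ¬ E i j → S i j = 0)
    (hSdiag : ∀ i, S i i = 1 - ∑ k ∈ Finset.univ \ {i}, S i k)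
    (hLazy : ∀ i, (1 : ℝ) / 2 ≤ S i i)
    (hIrred : ∀ i j, ∃ m : ℕ, 0 < (S ^ m) i j)
    (hAper : ∀ i, 0 < S i i)
    (π : Fin n → ℝ) (hπpos : ∀ i, 0 < π i) (hπsum : ∑ i, π i = 1)
    (hπstat : ∀ j, ∑ i, π i * S i j = π j)
    (hπuniq : ∀ π' : Fin n → ℝ, (∀ i, 0 ≤ π' i) → (∑ i, π' i = 1) →
      (∀ j, ∑ i, π' i * S i j = π' j) → π' = π)
    (hRev : ∀ i j, π i * S i j = π j * S j i)
    (hSkew : ∀ i j, i ≠ j → E i j → p i j + p j i = 1) :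
    ∀ i j, i ≠ j → E i j → p i j = π j / (π i + π j) := by
  intro i j hij hE
  have hE' := hEsymm i j hE
  have h1 := hRev i j
  rw [hSoff i j hij hE, hSoff j i hij.symm hE'] at h1
  have h2 : π i * p i j = π j * p j i := by
    field_simp at h1
    linarith
  have h3 : p j i = 1 - p i j := by linarith [hSkew i j hij hE]
  rw [h3] at h2
  have hsum : 0 < π i + π j := by linarith [hπpos i, hπpos j]
  field_simp
  ring_nf
  ring_nf at h2
  linarith
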